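/- arXiv:1712.04794 — 5 statements merged into one kernel-verified Lean document; each statement's English description precedes it below -/
import Mathlib

section
/- Let A and G be groups. Then G belongs to C_q(A) if and only if S_A G = G (i.e. the A-socle of G is the whole group G). -/
open CategoryTheory Limits

universe u v

/-- A class of groups closed under isomorphisms. -/
def IsoClosed (C : GrpCat.{u} → Prop) : Prop :=
  ∀ ⦃G H : GrpCat.{u}⦄, (G ≅ H) → C G → C H

/-- A class of groups is closed under direct limits if it contains the colimit
(computed in the category of groups) of every small diagram all of whose
objects belong to the class. -/
def ColimClosed (C : GrpCat.{u} → Prop) : Prop :=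
  ∀ (J : Type u) [SmallCategory J] (F : J ⥤ GrpCat.{u}) (c : Cocone F),
    IsColimit c → (∀ j, C (F.obj j)) → C c.pt

/-- A class of groups is closed under quotients if it contains the image of
every surjective homomorphism out of one of its members. -/
def QuotClosed (C : GrpCat.{u} → Prop) : Prop :=
  ∀ (G Q : GrpCat.{u}) (π : (G : Type u) →* Q),
    Function.Surjective π → C G → C Q

/-- `C_q(A)`: the smallest class of groups containing `A` and closed under
isomorphisms, direct limits and quotients. -/
def socClass (A G : GrpCat.{u}) : Prop :=
  ∀ C : GrpCat.{u} → Prop, IsoClosed C → ColimClosed C → QuotClosed C → C A → C G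

/-- The `A`-socle `S_A G` of `G`: the subgroup of `G` generated by the images
of all homomorphisms `A →* G`. -/
def socle (A : Type u) [Group A] (G : Type v) [Group G] : Subgroup G :=
  ⨆ f : A →* G, f.range

lemma socle_map_le {A : Type u} {G H : Type v} [Group A] [Group G] [Group H]
    (π : G →* H) : (socle A G).map π ≤ socle A H := by
  rw [socle, Subgroup.map_iSup]
  exact iSup_le fun f => by
    rw [← MonoidHom.range_comp]
    exact le_iSup (fun g : A →* H => g.range) (π.comp f)

lemma socle_eq_top_of_surjective {A : Type u} {G H : Type v} [Group A] [Group G] [Group H]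
    (π : G →* H) (hs : Function.Surjective π) (h : socle A G = ⊤) :
    socle A H = ⊤ := by
  refine top_le_iff.1 ?_
  calc (⊤ : Subgroup H) = (socle A G).map π := by
        rw [h, Subgroup.map_top_of_surjective π hs]
    _ ≤ socle A H := socle_map_le π

lemma Grp.hom_congr {X Y : GrpCat.{u}} {f g : X ⟶ Y} (h : f = g) (x : X) :
    f.hom x = g.hom x := by rw [h]

/-- The point of a colimit cocone in `Grp` is generated by the images of the legs. -/
lemma iSup_range_cocone_eq_top {J : Type u} [SmallCategory J] (F : J ⥤ GrpCat.{u})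
    (c : Cocone F) (hc : IsColimit c) :
    (⨆ j, ((c.ι.app j).hom).range : Subgroup (c.pt : Type u)) = ⊤ := by
  set S : Subgroup (c.pt : Type u) := ⨆ j, ((c.ι.app j).hom).range with hS
  have hmem : ∀ (j : J) (x : F.obj j), (c.ι.app j).hom x ∈ S :=
    fun j x => Subgroup.mem_iSup_of_mem j ⟨x, rfl⟩
  let c' : Cocone F :=
    { pt := GrpCat.of S
      ι :=
        { app := fun j => GrpCat.ofHom ((c.ι.app j).hom.codRestrict S (hmem j))
          naturality := by
            intro j j' φ
            ext x
            apply Subtype.ext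
            exact Grp.hom_congr (c.w φ) x } }
  let d : (c.pt : Type u) →* S := (hc.desc c').hom
  have hd : ∀ j (x : F.obj j), d ((c.ι.app j).hom x)
      = (c'.ι.app j).hom x := by
    intro j x
    exact Grp.hom_congr (hc.fac c' j) x
  have key : (hc.desc c' ≫ GrpCat.ofHom S.subtype : c.pt ⟶ c.pt) = 𝟙 c.pt := by
    refine hc.hom_ext fun j => ?_
    ext x
    show S.subtype (d ((c.ι.app j).hom x))
      = (c.ι.app j).hom x
    rw [hd j x]
    rfl
  refine top_le_iff.1 fun x _ => ?_
  have : S.subtype (d x) = x := Grp.hom_congr key x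
  rw [← this]
  exact (d x).2

/-- A group `G` belongs to `C_q(A)` if and only if the `A`-socle of `G` is all
of `G`. -/
theorem stmt5 (A G : GrpCat.{u}) :
    socClass A G ↔ socle (A : Type u) (G : Type u) = ⊤ := by
  constructor
  · intro h
    refine h (fun H => socle (A : Type u) (H : Type u) = ⊤) ?_ ?_ ?_ ?_
    · -- IsoClosed
      intro H K e hH
      refine socle_eq_top_of_surjective e.hom.hom (fun y => ⟨e.inv.hom y, ?_⟩) hH
      exact Grp.hom_congr e.inv_hom_id y
    · -- ColimClosed
      intro J _ F c hc hobj
      refine top_le_iff.1 ?_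
      rw [← iSup_range_cocone_eq_top F c hc]
      refine iSup_le fun j => ?_
      calc ((c.ι.app j).hom).range
          = (socle (A : Type u) (F.obj j : Type u)).map (c.ι.app j).hom := by
            rw [hobj j]
            exact MonoidHom.range_eq_map _
        _ ≤ socle (A : Type u) (c.pt : Type u) := socle_map_le _
    · -- QuotClosed
      intro H Q π hs hH
      exact socle_eq_top_of_surjective π hs hH
    · -- C A
      refine top_le_iff.1 fun x _ => ?_
      exact Subgroup.mem_iSup_of_mem (MonoidHom.id _) ⟨x, rfl⟩
  · intro h
    intro C hiso hcolim hquot hA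
    classical
    set ι : Type u := (A : Type u) →* G with hι
    let M : ι → Type u := fun _ => (A : Type u)
    let P := Monoid.CoprodI M
    let F : Discrete ι ⥤ GrpCat.{u} := Discrete.functor (fun _ => A)
    let c : Cocone F :=
      { pt := GrpCat.of P
        ι := Discrete.natTrans (fun i => GrpCat.ofHom (Monoid.CoprodI.of (M := M) (i := i.as))) }
    have hc : IsColimit c :=
      { desc := fun s => GrpCat.ofHom (Monoid.CoprodI.lift (fun i => (s.ι.app ⟨i⟩).hom) : P →* s.pt)
        fac := fun s j => by
          obtain ⟨i⟩ := j
          ext x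
          show (Monoid.CoprodI.lift fun i => (s.ι.app ⟨i⟩).hom) (Monoid.CoprodI.of x)
            = (s.ι.app ⟨i⟩).hom x
          rw [Monoid.CoprodI.lift_of]
        uniq := fun s m hm => by
          apply GrpCat.hom_ext
          refine Monoid.CoprodI.ext_hom _ _ fun i => ?_
          ext x
          have h1 := Grp.hom_congr (hm ⟨i⟩) x
          show m.hom (Monoid.CoprodI.of x)
            = (Monoid.CoprodI.lift fun i => (s.ι.app ⟨i⟩).hom) (Monoid.CoprodI.of x)
          rw [Monoid.CoprodI.lift_of]
          exact h1 }
    have hP : C (GrpCat.of P) := hcolim (Discrete ι) F c hc (fun j => hA)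
    let π : P →* (G : Type u) := Monoid.CoprodI.lift (fun f : ι => f)
    have hsurj : Function.Surjective π := by
      have : (⊤ : Subgroup (G : Type u)) ≤ π.range := by
        rw [← h]
        refine iSup_le fun f => ?_
        rintro x ⟨a, rfl⟩
        exact ⟨Monoid.CoprodI.of (i := f) a, by rw [Monoid.CoprodI.lift_of]⟩
      intro y
      exact this trivial
    exact hquot (GrpCat.of P) G π hsurj hP
end

section
/- Let A and G be groups. Then G belongs to C_t(A) if and only if T_A G = G (i.e. the A-radical of G is the whole group G). -/
open CategoryTheory Limits

universe u v

/-- A class of groups is closed under extensions if whenever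
`1 → N → G → Q → 1` is a short exact sequence with `N` and `Q` in the class,
then `G` is in the class. -/
def ExtClosed (C : GrpCat.{u} → Prop) : Prop :=
  ∀ (N G Q : GrpCat.{u}) (ι : (N : Type u) →* G) (π : (G : Type u) →* Q),
    Function.Injective ι → Function.Surjective π → ι.range = π.ker →
    C N → C Q → C G

/-- `C_t(A)`: the smallest class of groups containing `A` and closed under
isomorphisms, direct limits, quotients and extensions. -/
def radClass (A G : GrpCat.{u}) : Prop :=
  ∀ C : GrpCat.{u} → Prop, IsoClosed C → ColimClosed C → QuotClosed C → ExtClosed C → C A → C G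

/-- The `A`-radical `T_A G` of `G`: the smallest normal subgroup `N` of `G`
such that every homomorphism from `A` to `G ⧸ N` is trivial. -/
def radical (A : Type u) [Group A] (G : Type v) [Group G] : Subgroup G :=
  sInf {N : Subgroup G | ∃ _ : N.Normal, ∀ f : A →* G ⧸ N, f = 1}


lemma radical_eq_top_iff {A : Type u} [Group A] {G : Type v} [Group G] :
    radical A G = ⊤ ↔ ∀ (N : Subgroup G) (_ : N.Normal), (∀ f : A →* G ⧸ N, f = 1) → N = ⊤ := by
  constructor
  · intro h N hN hf
    have : radical A G ≤ N := sInf_le ⟨hN, hf⟩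
    rw [h] at this
    exact top_le_iff.mp this
  · intro h
    rw [radical, eq_top_iff]
    refine le_sInf ?_
    rintro N ⟨hN, hf⟩
    rw [h N hN hf]

lemma homs_trivial_comap {A K G : Type*} [Group A] [Group K] [Group G]
    (φ : K →* G) (N : Subgroup G) [hN : N.Normal]
    (h : ∀ f : A →* G ⧸ N, f = 1) (f : A →* K ⧸ N.comap φ) : f = 1 := by
  set ψ := (QuotientGroup.mk' N).comp φ with hψ
  have hker : N.comap φ = ψ.ker := by
    rw [hψ, ← MonoidHom.comap_ker, QuotientGroup.ker_mk']
  haveI : (N.comap φ).Normal := hN.comap φ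
  let e : K ⧸ N.comap φ ≃* K ⧸ ψ.ker := QuotientGroup.quotientMulEquivOfEq hker
  let g : K ⧸ N.comap φ →* G ⧸ N := (QuotientGroup.kerLift ψ).comp e.toMonoidHom
  have hginj : Function.Injective g :=
    (QuotientGroup.kerLift_injective ψ).comp e.injective
  have : g.comp f = 1 := h _
  ext a
  have h1 : g (f a) = g 1 := by
    rw [map_one]
    exact DFunLike.congr_fun this a
  exact hginj h1

lemma radical_top_of_surjective {A G H : Type*} [Group A] [Group G] [Group H]
    (π : G →* H) (hπ : Function.Surjective π) (hG : radical A G = ⊤) :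
    radical A H = ⊤ := by
  rw [radical_eq_top_iff] at hG ⊢
  intro N hN hf
  haveI := hN
  have hcom : N.comap π = ⊤ := hG _ (hN.comap π) (homs_trivial_comap π N hf)
  rw [eq_top_iff]
  intro q _
  obtain ⟨g, rfl⟩ := hπ q
  have : g ∈ N.comap π := hcom ▸ Subgroup.mem_top g
  exact this

lemma radical_self {A : Type*} [Group A] : radical A A = ⊤ := by
  rw [radical_eq_top_iff]
  intro N hN hf
  haveI := hN
  have h1 := hf (QuotientGroup.mk' N)
  rw [eq_top_iff]
  intro x _
  have : QuotientGroup.mk' N x = 1 := DFunLike.congr_fun h1 x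
  simpa [QuotientGroup.eq_one_iff] using this

lemma radical_top_of_extension {A N G Q : Type*} [Group A] [Group N] [Group G] [Group Q]
    (ι : N →* G) (π : G →* Q) (hι : Function.Injective ι) (hπ : Function.Surjective π)
    (hrk : ι.range = π.ker) (hN : radical A N = ⊤) (hQ : radical A Q = ⊤) :
    radical A G = ⊤ := by
  rw [radical_eq_top_iff] at hN hQ ⊢
  intro K hK hf
  haveI := hK
  -- Step 1: range ι ≤ K
  have h1 : K.comap ι = ⊤ := hN _ (hK.comap ι) (homs_trivial_comap ι K hf)
  have hrange : ι.range ≤ K := by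
    rintro x ⟨n, rfl⟩
    have : n ∈ K.comap ι := h1 ▸ Subgroup.mem_top n
    exact this
  have hker : π.ker ≤ K := hrk ▸ hrange
  -- Step 2: map π K = ⊤
  haveI hKm : (K.map π).Normal := hK.map π hπ
  set ψ := (QuotientGroup.mk' (K.map π)).comp π with hψ
  have hψsurj : Function.Surjective ψ := (QuotientGroup.mk'_surjective _).comp hπ
  have hkerψ : K = ψ.ker := by
    rw [hψ, ← MonoidHom.comap_ker, QuotientGroup.ker_mk', Subgroup.comap_map_eq]
    exact (sup_eq_left.mpr hker).symm
  let e : G ⧸ K ≃* Q ⧸ K.map π :=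
    (QuotientGroup.quotientMulEquivOfEq hkerψ).trans
      (QuotientGroup.quotientKerEquivOfSurjective ψ hψsurj)
  have h2 : K.map π = ⊤ := by
    refine hQ _ hKm (fun f => ?_)
    have h3 : (e.symm.toMonoidHom.comp f) = 1 := hf _
    ext a
    have : e.symm (f a) = 1 := DFunLike.congr_fun h3 a
    calc f a = e (e.symm (f a)) := (e.apply_symm_apply _).symm
    _ = e 1 := by rw [this]
    _ = 1 := map_one e
  -- conclude
  have : K = (K.map π).comap π := by
    rw [Subgroup.comap_map_eq, sup_eq_left.mpr hker]
  rw [this, h2, Subgroup.comap_top]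

lemma colimit_ranges_eq_top {J : Type u} [SmallCategory J] (F : J ⥤ GrpCat.{u}) (c : Cocone F)
    (hc : IsColimit c) :
    (⨆ j : J, MonoidHom.range (c.ι.app j).hom : Subgroup ↥c.pt) = ⊤ := by
  let φ : ∀ j : J, ↥(F.obj j) →* ↥c.pt := fun j => (c.ι.app j).hom
  let S : Subgroup ↥c.pt := ⨆ j : J, MonoidHom.range (φ j)
  have hmem : ∀ (j : J) (x : ↥(F.obj j)), φ j x ∈ S :=
    fun j x => le_iSup (fun j => MonoidHom.range (φ j)) j ⟨x, rfl⟩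
  let c' : Cocone F :=
    { pt := GrpCat.of S
      ι :=
        { app := fun j => GrpCat.ofHom ((φ j).codRestrict S (hmem j))
          naturality := fun j j' f => by
            ext x
            apply Subtype.ext
            show c.ι.app j' ((F.map f) x) = c.ι.app j x
            rw [← CategoryTheory.comp_apply, c.w f] } }
  let d : c.pt ⟶ GrpCat.of S := hc.desc c'
  have hd : d ≫ GrpCat.ofHom S.subtype = 𝟙 c.pt := by
    refine hc.hom_ext (fun j => ?_)
    rw [← Category.assoc, hc.fac c' j]
    ext x
    rfl
  rw [eq_top_iff]
  intro x _
  have h2 : (d ≫ GrpCat.ofHom S.subtype) x = x := by rw [hd]; rfl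
  have h3 : S.subtype (d x) = x := h2
  rw [← h3]
  exact (d x).2

lemma colim_closed_radical_top (A : GrpCat.{u}) :
    ColimClosed (fun G : GrpCat.{u} => radical (A : Type u) (G : Type u) = ⊤) := by
  intro J _ F c hc hobj
  rw [radical_eq_top_iff]
  intro K hK hf
  haveI := hK
  have hle : ∀ j : J, MonoidHom.range (c.ι.app j).hom ≤ K := by
    intro j
    have h1 : K.comap (c.ι.app j).hom = ⊤ :=
      (radical_eq_top_iff.mp (hobj j)) _ (hK.comap _) (homs_trivial_comap _ K hf)
    rintro x ⟨y, rfl⟩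
    have : y ∈ K.comap (c.ι.app j).hom := h1 ▸ Subgroup.mem_top y
    exact this
  have := colimit_ranges_eq_top F c hc
  rw [eq_top_iff, ← this]
  exact iSup_le hle

lemma forward_dir (A G : GrpCat.{u}) (h : radClass A G) :
    radical (A : Type u) (G : Type u) = ⊤ := by
  refine h (fun H : GrpCat.{u} => radical (A : Type u) (H : Type u) = ⊤) ?_ ?_ ?_ ?_ ?_
  · intro X Y e hX
    refine radical_top_of_surjective e.hom.hom ?_ hX
    intro y
    refine ⟨e.inv y, ?_⟩
    have : (e.inv ≫ e.hom) y = y := by rw [e.inv_hom_id]; rfl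
    exact this
  · exact colim_closed_radical_top A
  · intro X Y π hπ hX
    exact radical_top_of_surjective π hπ hX
  · intro N X Q ι π hι hπ hrk hN hQ
    exact radical_top_of_extension ι π hι hπ hrk hN hQ
  · exact radical_self

lemma coprod_mem (A : GrpCat.{u}) (C : GrpCat.{u} → Prop) (hcolim : ColimClosed C) (hA : C A)
    (ι : Type u) : C (GrpCat.of (Monoid.CoprodI (fun _ : ι => (A : Type u)))) := by
  let F : Discrete ι ⥤ GrpCat.{u} := Discrete.functor (fun _ => A)
  let cf : Cofan (fun _ : ι => A) :=
    Cofan.mk (GrpCat.of (Monoid.CoprodI (fun _ : ι => (A : Type u))))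
      (fun i => GrpCat.ofHom (Monoid.CoprodI.of (M := fun _ : ι => (A : Type u)) (i := i)))
  have hism : IsColimit cf := by
    refine mkCofanColimit cf
      (fun t => GrpCat.ofHom (Monoid.CoprodI.lift (fun i => (t.inj i).hom))) ?_ ?_
    · intro t i
      ext a
      show (Monoid.CoprodI.lift (fun i => (t.inj i).hom))
          ((Monoid.CoprodI.of (M := fun _ : ι => (A : Type u)) (i := i)) a) = t.inj i a
      exact Monoid.CoprodI.lift_of (M := fun _ : ι => (A : Type u))
        (fun i => (t.inj i).hom) a
    · intro t m hm
      refine GrpCat.hom_ext (Monoid.CoprodI.ext_hom _ _ (fun i => ?_))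
      ext a
      have h1 : m ((Monoid.CoprodI.of (M := fun _ : ι => (A : Type u)) (i := i)) a) = t.inj i a := by
        rw [← hm i]; rfl
      have h2 : (Monoid.CoprodI.lift (fun i => (t.inj i).hom))
          ((Monoid.CoprodI.of (M := fun _ : ι => (A : Type u)) (i := i)) a) = t.inj i a := Monoid.CoprodI.lift_of (M := fun _ : ι => (A : Type u))
            (fun i => (t.inj i).hom) a
      exact h1.trans h2.symm
  exact hcolim (Discrete ι) F cf hism (fun j => hA)

def omegaSub (A : Type u) [Group A] (H : Type v) [Group H] : Subgroup H :=
  Subgroup.closure (⋃ f : A →* H, Set.range f)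

lemma omegaSub_normal (A : Type u) [Group A] (H : Type v) [Group H] :
    (omegaSub A H).Normal := by
  constructor
  intro n hn g
  refine Subgroup.closure_induction
    (p := fun x _ => g * x * g⁻¹ ∈ omegaSub A H) ?_ ?_ ?_ ?_ hn
  · intro x hx
    obtain ⟨s, ⟨f, rfl⟩, a, rfl⟩ := hx
    refine Subgroup.subset_closure ?_
    exact Set.mem_iUnion.mpr ⟨((MulAut.conj g).toMonoidHom.comp f), a, rfl⟩
  · simpa using one_mem (omegaSub A H)
  · intro x y _ _ hx hy
    have : g * (x * y) * g⁻¹ = (g * x * g⁻¹) * (g * y * g⁻¹) := by group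
    rw [this]
    exact mul_mem hx hy
  · intro x _ hx
    have : g * x⁻¹ * g⁻¹ = (g * x * g⁻¹)⁻¹ := by group
    rw [this]
    exact inv_mem hx

lemma omega_mem (A : GrpCat.{u}) (C : GrpCat.{u} → Prop) (hcolim : ColimClosed C)
    (hquot : QuotClosed C) (hA : C A) (H : Type u) [Group H] :
    C (GrpCat.of (omegaSub (A : Type u) H)) := by
  classical
  let ix := ((A : Type u) →* H)
  let CP := Monoid.CoprodI (fun _ : ix => (A : Type u))
  have hmemΩ : ∀ (f : ix) (a : (A : Type u)), f a ∈ omegaSub (A : Type u) H := by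
    intro f a
    exact Subgroup.subset_closure (Set.mem_iUnion.mpr ⟨f, a, rfl⟩)
  let L : CP →* ↥(omegaSub (A : Type u) H) :=
    Monoid.CoprodI.lift (fun f : ix => (f.codRestrict _ (hmemΩ f)))
  have hLsurj : Function.Surjective L := by
    intro y
    have hy : y.1 ∈ Subgroup.map (omegaSub (A : Type u) H).subtype L.range := by
      have hle : omegaSub (A : Type u) H ≤
          Subgroup.map (omegaSub (A : Type u) H).subtype L.range := by
        refine Subgroup.closure_le _ |>.mpr ?_
        rintro x hx
        obtain ⟨s, ⟨f, rfl⟩, a, rfl⟩ := hx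
        refine ⟨L ((Monoid.CoprodI.of (M := fun _ : ix => (A : Type u)) (i := f)) a),
          ⟨_, rfl⟩, ?_⟩
        have : L ((Monoid.CoprodI.of (M := fun _ : ix => (A : Type u)) (i := f)) a)
            = (f.codRestrict _ (hmemΩ f)) a :=
          Monoid.CoprodI.lift_of (M := fun _ : ix => (A : Type u)) _ a
        rw [this]
        rfl
      exact hle y.2
    obtain ⟨z, hz, hz2⟩ := hy
    obtain ⟨w, rfl⟩ := hz
    exact ⟨w, Subtype.ext hz2⟩
  exact hquot (GrpCat.of CP) (GrpCat.of (omegaSub (A : Type u) H)) L hLsurj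
    (coprod_mem A C hcolim hA ix)

lemma chain_mem (G : GrpCat.{u}) (C : GrpCat.{u} → Prop) (hcolim : ColimClosed C)
    (c : Set (Subgroup (G : Type u))) (hc : IsChain (· ≤ ·) c) (hne : c.Nonempty)
    (hmem : ∀ N ∈ c, C (GrpCat.of ↥N)) :
    C (GrpCat.of ↥(⨆ N : c, (N : Subgroup (G : Type u)))) := by
  classical
  haveI : Nonempty ↥c := hne.to_subtype
  set U : Subgroup (G : Type u) := ⨆ N : c, (N : Subgroup (G : Type u)) with hU
  have dir : Directed (· ≤ ·) (fun N : c => (N : Subgroup (G : Type u))) := by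
    intro N N'
    rcases hc.total N.2 N'.2 with h | h
    · exact ⟨N', h, le_refl _⟩
    · exact ⟨N, le_refl _, h⟩
  have memU : ∀ x : (G : Type u), x ∈ U ↔ ∃ N : c, x ∈ (N : Subgroup (G : Type u)) :=
    fun x => Subgroup.mem_iSup_of_directed dir
  have hNle : ∀ N : c, (N : Subgroup (G : Type u)) ≤ U :=
    fun N => le_iSup (fun N : c => (N : Subgroup (G : Type u))) N
  -- the diagram
  let F : ↥c ⥤ GrpCat.{u} :=
    { obj := fun N => GrpCat.of ↥(N : Subgroup (G : Type u))
      map := fun {N N'} h => GrpCat.ofHom (Subgroup.inclusion (leOfHom h))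
      map_id := fun N => by ext x; rfl
      map_comp := fun f g => by ext x; rfl }
  let cc : Cocone F :=
    { pt := GrpCat.of ↥U
      ι :=
        { app := fun N => GrpCat.ofHom (Subgroup.inclusion (hNle N))
          naturality := fun N N' f => by
            ext x
            apply Subtype.ext
            rfl } }
  -- compatibility
  have compat : ∀ (s : Cocone F) (N N' : ↥c) (x : (G : Type u))
      (hx : x ∈ (N : Subgroup (G : Type u))) (hx' : x ∈ (N' : Subgroup (G : Type u))),
      (s.ι.app N).hom ⟨x, hx⟩
        = (s.ι.app N').hom ⟨x, hx'⟩ := by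
    have key : ∀ (s : Cocone F) (N N' : ↥c) (h : N ≤ N') (x : (G : Type u))
        (hx : x ∈ (N : Subgroup (G : Type u))) (hx' : x ∈ (N' : Subgroup (G : Type u))),
        (s.ι.app N).hom ⟨x, hx⟩
          = (s.ι.app N').hom ⟨x, hx'⟩ := by
      intro s N N' h x hx hx'
      have hw := s.w (homOfLE h)
      calc (s.ι.app N).hom ⟨x, hx⟩
          = (F.map (homOfLE h) ≫ s.ι.app N') ⟨x, hx⟩ := by rw [hw]
        _ = (s.ι.app N').hom ⟨x, hx'⟩ := rfl
    intro s N N' x hx hx'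
    rcases hc.total N.2 N'.2 with h | h
    · exact key s N N' h x hx hx'
    · exact (key s N' N h x hx' hx).symm
  -- the descent homomorphism
  let φfun : ∀ (s : Cocone F), ↥U → ↥s.pt := fun s x =>
    (s.ι.app ((memU x.1).mp x.2).choose).hom
      ⟨x.1, ((memU x.1).mp x.2).choose_spec⟩
  have φkey : ∀ (s : Cocone F) (N : ↥c) (x : (G : Type u))
      (hx : x ∈ (N : Subgroup (G : Type u))) (hxU : x ∈ U),
      φfun s ⟨x, hxU⟩ = (s.ι.app N).hom ⟨x, hx⟩ :=
    fun s N x hx hxU => compat s _ N x _ hx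
  let φ : ∀ (s : Cocone F), ↥U →* ↥s.pt := fun s =>
    { toFun := φfun s
      map_one' := by
        show φfun s 1 = 1
        obtain ⟨N⟩ := (inferInstance : Nonempty ↥c)
        rw [show (1 : ↥U) = ⟨1, one_mem U⟩ from rfl, φkey s N 1 (one_mem _) (one_mem _)]
        exact map_one _
      map_mul' := by
        intro x y
        show φfun s (x * y) = φfun s x * φfun s y
        obtain ⟨Nx, hx⟩ := (memU x.1).mp x.2
        obtain ⟨Ny, hy⟩ := (memU y.1).mp y.2
        obtain ⟨N, hxN, hyN⟩ : ∃ N : ↥c, x.1 ∈ (N : Subgroup (G : Type u)) ∧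
            y.1 ∈ (N : Subgroup (G : Type u)) := by
          rcases hc.total Nx.2 Ny.2 with h | h
          · exact ⟨Ny, h hx, hy⟩
          · exact ⟨Nx, hx, h hy⟩
        have hxy : x.1 * y.1 ∈ (N : Subgroup (G : Type u)) := mul_mem hxN hyN
        have e1 : φfun s x = (s.ι.app N) ⟨x.1, hxN⟩ := φkey s N x.1 hxN x.2
        have e2 : φfun s y = (s.ι.app N) ⟨y.1, hyN⟩ := φkey s N y.1 hyN y.2
        have e3 : φfun s (x * y) = (s.ι.app N) ⟨x.1 * y.1, hxy⟩ :=
          φkey s N (x.1 * y.1) hxy (x * y).2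
        rw [e1, e2, e3]
        exact map_mul (s.ι.app N).hom
          ⟨x.1, hxN⟩ ⟨y.1, hyN⟩ }
  have hic : IsColimit cc :=
    { desc := fun s => GrpCat.ofHom (φ s)
      fac := fun s N => by
        ext x
        show φfun s (Subgroup.inclusion (hNle N) x) = _
        rw [show Subgroup.inclusion (hNle N) x = ⟨x.1, hNle N x.2⟩ from rfl,
          φkey s N x.1 x.2 _]
      uniq := fun s m hm => by
        ext x
        obtain ⟨N, hN⟩ := (memU x.1).mp x.2
        have h1 : x = Subgroup.inclusion (hNle N) ⟨x.1, hN⟩ := Subtype.ext rfl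
        rw [h1]
        have h2 := hm N
        calc m (Subgroup.inclusion (hNle N) ⟨x.1, hN⟩)
            = (cc.ι.app N ≫ m) ⟨x.1, hN⟩ := rfl
          _ = (s.ι.app N).hom ⟨x.1, hN⟩ := by rw [h2]
          _ = φfun s (Subgroup.inclusion (hNle N) ⟨x.1, hN⟩) := by
              rw [show Subgroup.inclusion (hNle N) (⟨x.1, hN⟩ : ↥(N : Subgroup (G : Type u)))
                = ⟨x.1, hNle N hN⟩ from rfl, φkey s N x.1 hN _] }
  exact hcolim ↥c F cc hic (fun N => hmem N N.2)

lemma backward_dir (A G : GrpCat.{u})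
    (hrad : ∀ (N : Subgroup (G : Type u)) (_ : N.Normal),
      (∀ f : (A : Type u) →* (G : Type u) ⧸ N, f = 1) → N = ⊤)
    (C : GrpCat.{u} → Prop) (hiso : IsoClosed C) (hcolim : ColimClosed C)
    (hquot : QuotClosed C) (hext : ExtClosed C) (hA : C A) : C G := by
  classical
  set S : Set (Subgroup (G : Type u)) := {N | N.Normal ∧ C (GrpCat.of ↥N)} with hS
  have hbot : (⊥ : Subgroup (G : Type u)) ∈ S := by
    refine ⟨inferInstance, ?_⟩
    refine hquot A (GrpCat.of ↥(⊥ : Subgroup (G : Type u))) 1 ?_ hA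
    intro x
    refine ⟨1, ?_⟩
    have hx1 : x = 1 := Subtype.ext (Subgroup.mem_bot.mp x.2)
    rw [hx1]
    rfl
  have hchain : ∀ c ⊆ S, IsChain (· ≤ ·) c → ∀ y ∈ c,
      ∃ ub ∈ S, ∀ z ∈ c, z ≤ ub := by
    intro c hsub hch y hy
    haveI : Nonempty ↥c := ⟨⟨y, hy⟩⟩
    have dir : Directed (· ≤ ·) (fun N : c => (N : Subgroup (G : Type u))) := by
      intro N N'
      rcases hch.total N.2 N'.2 with h | h
      · exact ⟨N', h, le_refl _⟩
      · exact ⟨N, le_refl _, h⟩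
    refine ⟨⨆ N : c, (N : Subgroup (G : Type u)), ⟨?_, ?_⟩, ?_⟩
    · constructor
      intro n hn g
      obtain ⟨N, hN⟩ := (Subgroup.mem_iSup_of_directed dir).mp hn
      exact (Subgroup.mem_iSup_of_directed dir).mpr
        ⟨N, (hsub N.2).1.conj_mem n hN g⟩
    · exact chain_mem G C hcolim c hch ⟨y, hy⟩ (fun N hN => (hsub hN).2)
    · intro z hz
      exact le_iSup (fun N : c => (N : Subgroup (G : Type u))) ⟨z, hz⟩
  obtain ⟨M, -, hMmax⟩ := zorn_le_nonempty₀ S hchain ⊥ hbot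
  haveI hMnorm : M.Normal := hMmax.1.1
  have hMtop : M = ⊤ := by
    by_contra hne
    have hex : ∃ f : (A : Type u) →* (G : Type u) ⧸ M, f ≠ 1 := by
      by_contra hfa
      push_neg at hfa
      exact hne (hrad M hMnorm hfa)
    obtain ⟨f, hf⟩ := hex
    set Ω : Subgroup ((G : Type u) ⧸ M) := omegaSub (A : Type u) ((G : Type u) ⧸ M) with hΩ
    haveI hΩn : Ω.Normal := omegaSub_normal _ _
    set M' : Subgroup (G : Type u) := Ω.comap (QuotientGroup.mk' M) with hM'
    have hMM' : M ≤ M' := by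
      intro x hx
      show QuotientGroup.mk' M x ∈ Ω
      have h1 : QuotientGroup.mk' M x = 1 := (QuotientGroup.eq_one_iff x).mpr hx
      rw [h1]
      exact one_mem Ω
    let π : ↥M' →* ↥Ω :=
      MonoidHom.codRestrict ((QuotientGroup.mk' M).domRestrict M') Ω (fun x => x.2)
    have hM'S : M' ∈ S := by
      refine ⟨hΩn.comap _, ?_⟩
      refine hext (GrpCat.of ↥M) (GrpCat.of ↥M') (GrpCat.of ↥Ω)
        (Subgroup.inclusion hMM') π (Subgroup.inclusion_injective hMM') ?_ ?_
        hMmax.1.2 (omega_mem A C hcolim hquot hA ((G : Type u) ⧸ M))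
      · intro y
        obtain ⟨g, hg⟩ := QuotientGroup.mk'_surjective M y.1
        have hgM' : g ∈ M' := by
          show QuotientGroup.mk' M g ∈ Ω
          rw [hg]
          exact y.2
        exact ⟨⟨g, hgM'⟩, Subtype.ext hg⟩
      · ext x
        constructor
        · rintro ⟨n, rfl⟩
          show π (Subgroup.inclusion hMM' n) = 1
          refine Subtype.ext ?_
          show QuotientGroup.mk' M n.1 = 1
          exact (QuotientGroup.eq_one_iff n.1).mpr n.2
        · intro hx
          have h1 : π x = 1 := hx
          have h2 : QuotientGroup.mk' M x.1 = 1 := congrArg Subtype.val h1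
          have h3 : x.1 ∈ M := (QuotientGroup.eq_one_iff x.1).mp h2
          exact ⟨⟨x.1, h3⟩, Subtype.ext rfl⟩
    have hle : M' ≤ M := hMmax.2 hM'S hMM'
    have hexa : ∃ a, f a ≠ 1 := by
      by_contra hall
      push_neg at hall
      exact hf (MonoidHom.ext (fun a => hall a))
    obtain ⟨a, ha⟩ := hexa
    have hfa : f a ∈ Ω := Subgroup.subset_closure (Set.mem_iUnion.mpr ⟨f, a, rfl⟩)
    obtain ⟨g, hg⟩ := QuotientGroup.mk'_surjective M (f a)
    have hgM' : g ∈ M' := by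
      show QuotientGroup.mk' M g ∈ Ω
      rw [hg]
      exact hfa
    have hgM : g ∈ M := hle hgM'
    have : f a = 1 := by
      rw [← hg]
      exact (QuotientGroup.eq_one_iff g).mpr hgM
    exact ha this
  have hCtop : C (GrpCat.of ↥(⊤ : Subgroup (G : Type u))) := hMtop ▸ hMmax.1.2
  exact hiso
    (MulEquiv.toGrpIso (X := GrpCat.of ↥(⊤ : Subgroup (G : Type u))) (Y := G)
      Subgroup.topEquiv) hCtop

/-- A group `G` belongs to `C_t(A)` if and only if the `A`-radical of `G` is
all of `G`. -/
theorem stmt6 (A G : GrpCat.{u}) :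
    radClass A G ↔ radical (A : Type u) (G : Type u) = ⊤ := by
  constructor
  · exact forward_dir A G
  · intro h C hiso hcolim hquot hext hA
    exact backward_dir A G (radical_eq_top_iff.mp h) C hiso hcolim hquot hext hA
end

section
/- For every pair of groups A and G, the A-socle S_A G belongs to C_q(A), and for every group L belonging to C_q(A), composition with the inclusion S_A G ↪ G induces a bijection Hom(L, S_A G) → Hom(L, G). (In other words, the class C_q(A) is co-reflective with co-reflection given by the A-socle.) -/
open CategoryTheory Limits

universe u v

lemma colim_gen {J : Type u} [SmallCategory J] (F : J ⥤ GrpCat.{u}) (c : Cocone F)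
    (hc : IsColimit c) (H : Subgroup (c.pt : Type u))
    (hle : ∀ j x, c.ι.app j x ∈ H) : ∀ y : (c.pt : Type u), y ∈ H := by
  let d : Cocone F :=
    { pt := GrpCat.of H
      ι :=
      { app := fun j => GrpCat.ofHom (((c.ι.app j).hom : (F.obj j : Type u) →* (c.pt : Type u)).codRestrict H
          (hle j) : (F.obj j : Type u) →* H)
        naturality := by
          intro j j' f
          ext x
          exact Subtype.ext (congr_arg (fun φ => GrpCat.Hom.hom φ x) (c.ι.naturality f)) } }
  have key : (hc.desc d ≫ (show GrpCat.of ↥H ⟶ c.pt from GrpCat.ofHom H.subtype)) = 𝟙 c.pt := by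
    apply hc.hom_ext
    intro j
    rw [← Category.assoc, hc.fac]
    ext x
    rfl
  intro y
  have h2 : H.subtype (hc.desc d y) = y := congr_arg (fun φ => GrpCat.Hom.hom φ y) key
  exact h2 ▸ (hc.desc d y).2

lemma mem_socle_of_hom {A : Type u} [Group A] {G : Type v} [Group G]
    (f : A →* G) (x : A) : f x ∈ socle A G :=
  Subgroup.mem_iSup_of_mem f ⟨x, rfl⟩

/-- `C_q(A)` is co-reflective with co-reflection the `A`-socle: `S_A G` belongs
to `C_q(A)`, and for every `L` in `C_q(A)` composition with the inclusion
`S_A G ↪ G` is a bijection `Hom(L, S_A G) → Hom(L, G)`. -/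
theorem stmt7 (A G : GrpCat.{u}) :
    socClass A (GrpCat.of (socle (A : Type u) (G : Type u))) ∧
      ∀ L : GrpCat.{u}, socClass A L →
        Function.Bijective
          (fun f : (L : Type u) →* socle (A : Type u) (G : Type u) =>
            (socle (A : Type u) (G : Type u)).subtype.comp f) := by
  constructor
  · -- the socle is in the class
    intro C hiso hcolim hquot hA
    let ι := ((A : Type u) →* (G : Type u))
    let P := Monoid.CoprodI (fun _ : ι => (A : Type u))
    let F : Discrete ι ⥤ GrpCat.{u} := Discrete.functor (fun _ => A)
    let c : Cocone F :=
      { pt := GrpCat.of P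
        ι := Discrete.natTrans (fun j =>
          GrpCat.ofHom ((Monoid.CoprodI.of (M := fun _ : ι => (A : Type u)) (i := j.as)) :
            (A : Type u) →* P)) }
    let fam : ∀ s : Cocone F, ∀ f : ι, (A : Type u) →* (s.pt : Type u) :=
      fun s f => (s.ι.app ⟨f⟩).hom
    let hc : IsColimit c :=
      { desc := fun s => GrpCat.ofHom (Monoid.CoprodI.lift (fam s) : P →* (s.pt : Type u))
        fac := fun s j => by
          obtain ⟨f⟩ := j
          ext x
          show Monoid.CoprodI.lift (fam s) (Monoid.CoprodI.of x) = fam s f x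
          exact Monoid.CoprodI.lift_of (i := f) (fam s) x
        uniq := fun s m hm => by
          refine GrpCat.hom_ext (Monoid.CoprodI.ext_hom _ _ (fun f => ?_))
          ext x
          have h1 : m (Monoid.CoprodI.of x) = s.ι.app ⟨f⟩ x :=
            congr_arg (fun φ => GrpCat.Hom.hom φ x) (hm ⟨f⟩)
          have h2 := Monoid.CoprodI.lift_of (i := f) (fam s) x
          show m (Monoid.CoprodI.of x) = Monoid.CoprodI.lift (fam s) (Monoid.CoprodI.of x)
          exact h1.trans h2.symm }
    have hCpt : C c.pt := hcolim (Discrete ι) F c hc (fun j => hA)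
    let π : P →* socle (A : Type u) (G : Type u) :=
      Monoid.CoprodI.lift (fun f : ι =>
        f.codRestrict (socle (A : Type u) (G : Type u)) (fun x => mem_socle_of_hom f x))
    have hsurj : Function.Surjective π := by
      intro y
      have : ∀ g ∈ socle (A : Type u) (G : Type u),
          ∃ x, ((π x : _) : (G : Type u)) = g := by
        intro g hg
        refine Subgroup.iSup_induction (C := fun g => ∃ x, ((π x : _) : (G : Type u)) = g)
          (fun f : ι => f.range) hg ?_ ?_ ?_
        · rintro f _ ⟨a, rfl⟩
          refine ⟨Monoid.CoprodI.of (M := fun _ : ι => (A : Type u)) (i := f) a, ?_⟩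
          have := Monoid.CoprodI.lift_of (M := fun _ : ι => (A : Type u)) (i := f) (fun f : ι =>
            f.codRestrict (socle (A : Type u) (G : Type u))
              (fun x => mem_socle_of_hom f x)) a
          rw [show π (Monoid.CoprodI.of a) = _ from this]
          rfl
        · exact ⟨1, by simp⟩
        · rintro x y ⟨a, rfl⟩ ⟨b, rfl⟩
          exact ⟨a * b, by simp⟩
      obtain ⟨x, hx⟩ := this y.1 y.2
      exact ⟨x, Subtype.ext hx⟩
    exact hquot c.pt (GrpCat.of (socle (A : Type u) (G : Type u))) π hsurj hCpt
  · intro L hL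
    constructor
    · intro f f' h
      ext x
      exact DFunLike.congr_fun h x
    · intro g
      have key : ∀ h : (L : Type u) →* (G : Type u), ∀ x,
          h x ∈ socle (A : Type u) (G : Type u) := by
        refine hL (fun L' => ∀ h : (L' : Type u) →* (G : Type u), ∀ x,
          h x ∈ socle (A : Type u) (G : Type u)) ?_ ?_ ?_ ?_
        · intro G₁ G₂ e h₁ h x
          have hx : (e.hom.hom : (G₁ : Type u) →* G₂) ((e.inv.hom : (G₂ : Type u) →* G₁) x) = x :=
            congr_arg (fun φ => GrpCat.Hom.hom φ x) e.inv_hom_id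
          have := h₁ (h.comp (e.hom.hom : (G₁ : Type u) →* G₂)) ((e.inv.hom : (G₂ : Type u) →* G₁) x)
          simpa [hx] using this
        · intro J _ F c hc hj h x
          exact colim_gen F c hc ((socle (A : Type u) (G : Type u)).comap h)
            (fun j a => hj j (h.comp (c.ι.app j).hom) a) x
        · intro G₁ Q p hp h₁ h x
          obtain ⟨y, rfl⟩ := hp x
          exact h₁ (h.comp p) y
        · intro h x
          exact mem_socle_of_hom h x
      exact ⟨g.codRestrict _ (key g), by ext x; rfl⟩
end

section
/- For every pair of groups A and G, the A-radical T_A G belongs to C_t(A), and for every group L belonging to C_t(A), composition with the inclusion T_A G ↪ G induces a bijection Hom(L, T_A G) → Hom(L, G). (In other words, the class C_t(A) is co-reflective with co-reflection given by the A-radical.) -/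
open CategoryTheory Limits

universe u v

lemma radical_normal (A : Type u) [Group A] (G : Type v) [Group G] : (radical A G).Normal := by
  constructor
  intro n hn g
  rw [radical, Subgroup.mem_sInf] at hn ⊢
  intro N hN
  obtain ⟨h, -⟩ := id hN
  exact h.conj_mem n (hn N hN) g

lemma radical_hom_triv (A : Type u) [Group A] (G : Type v) [Group G] :
    letI := radical_normal A G
    ∀ f : A →* G ⧸ radical A G, f = 1 := by
  letI := radical_normal A G
  intro f
  ext a
  obtain ⟨x, hx⟩ := QuotientGroup.mk'_surjective (radical A G) (f a)
  have hxmem : x ∈ radical A G := by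
    rw [radical, Subgroup.mem_sInf]
    intro N hN
    obtain ⟨hnorm, htriv⟩ := id hN
    have hle : radical A G ≤ Subgroup.comap (MonoidHom.id G) N := by
      exact sInf_le hN
    have hmap : (QuotientGroup.map (radical A G) N (MonoidHom.id G) hle).comp f = 1 := htriv _
    have h2 := DFunLike.congr_fun hmap a
    rw [MonoidHom.comp_apply, ← hx, QuotientGroup.map_mk'] at h2
    simpa using (QuotientGroup.eq_one_iff x).mp h2
  calc f a = QuotientGroup.mk' (radical A G) x := hx.symm
  _ = 1 := (QuotientGroup.eq_one_iff x).mpr hxmem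

lemma radical_mem_set (A : Type u) [Group A] (G : Type v) [Group G] :
    radical A G ∈ {N : Subgroup G | ∃ _ : N.Normal, ∀ f : A →* G ⧸ N, f = 1} :=
  ⟨radical_normal A G, radical_hom_triv A G⟩

lemma radical_quot_eq_bot (A : Type u) [Group A] (H : Type v) [Group H] (T : Subgroup H)
    [T.Normal] (hT : ∀ f : A →* H ⧸ T, f = 1) : radical A (H ⧸ T) = ⊥ := by
  refine le_antisymm (sInf_le ⟨inferInstance, fun f => ?_⟩) bot_le
  ext a
  have h2 : ((QuotientGroup.quotientBot (G := H ⧸ T)).toMonoidHom.comp f) = 1 := hT _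
  have h3 := DFunLike.congr_fun h2 a
  rw [MonoidHom.comp_apply] at h3
  have h4 : QuotientGroup.quotientBot (G := H ⧸ T) (f a) = QuotientGroup.quotientBot (G := H ⧸ T) 1 := by
    rw [map_one]; exact h3
  rw [MonoidHom.one_apply]
  exact (QuotientGroup.quotientBot (G := H ⧸ T)).injective h4

lemma colimit_iSup_range {J : Type u} [SmallCategory J] {F : J ⥤ GrpCat.{u}} {c : Cocone F}
    (hc : IsColimit c) :
    (⨆ j, MonoidHom.range ((c.ι.app j).hom : (F.obj j : Type u) →* (c.pt : Type u))
      : Subgroup (c.pt : Type u)) = ⊤ := by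
  let S : Subgroup (c.pt : Type u) :=
    ⨆ j, MonoidHom.range ((c.ι.app j).hom : (F.obj j : Type u) →* (c.pt : Type u))
  have hmem : ∀ j (x : (F.obj j : Type u)), ((c.ι.app j).hom : (F.obj j : Type u) →* _) x ∈ S :=
    fun j x => Subgroup.mem_iSup_of_mem j (MonoidHom.mem_range.2 ⟨x, rfl⟩)
  let c' : Cocone F :=
    { pt := GrpCat.of S
      ι := { app := fun j => GrpCat.ofHom (MonoidHom.codRestrict
                ((c.ι.app j).hom : (F.obj j : Type u) →* _) S (hmem j))
             naturality := fun j j' φ => by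
               ext x
               exact Subtype.ext (ConcreteCategory.congr_hom (c.w φ) x) } }
  let d : c.pt ⟶ GrpCat.of S := hc.desc c'
  have hd : ∀ j, c.ι.app j ≫ d = c'.ι.app j := fun j => hc.fac c' j
  have key : (S.subtype.comp (d.hom : (c.pt : Type u) →* S) : _ →* _) = MonoidHom.id _ := by
    have h5 := hc.hom_ext (f := (GrpCat.ofHom (S.subtype.comp (d.hom : (c.pt : Type u) →* S)) : c.pt ⟶ c.pt))
      (f' := 𝟙 c.pt) ?_
    · exact congrArg GrpCat.Hom.hom h5
    · intro j
      simp only [Category.comp_id]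
      ext x
      have h1 := ConcreteCategory.congr_hom (hd j) x
      show S.subtype (d.hom ((c.ι.app j).hom x)) = _
      rw [show (d.hom (((c.ι.app j).hom : (F.obj j : Type u) →* _) x) : S) =
        ((c'.ι.app j).hom : (F.obj j : Type u) →* S) x from h1]
      rfl
  rw [eq_top_iff]
  intro x _
  have h6 := DFunLike.congr_fun key x
  rw [MonoidHom.comp_apply, MonoidHom.id_apply] at h6
  show x ∈ S
  rw [← h6]
  exact ((d.hom : (c.pt : Type u) →* S) x).2

lemma radClass_range_le (A : GrpCat.{u}) :
    ∀ (L : GrpCat.{u}), radClass A L → ∀ (H : GrpCat.{u}) (f : (L : Type u) →* (H : Type u)),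
      f.range ≤ radical (A : Type u) (H : Type u) := by
  intro L hL
  refine hL (fun L => ∀ (H : GrpCat.{u}) (f : (L : Type u) →* (H : Type u)),
    f.range ≤ radical (A : Type u) (H : Type u)) ?_ ?_ ?_ ?_ ?_
  · -- IsoClosed
    intro X Y e hX H f x hx
    obtain ⟨y, rfl⟩ := MonoidHom.mem_range.1 hx
    have h1 : (e.hom.hom : (X : Type u) →* Y) ((e.inv.hom : (Y : Type u) →* X) y) = y := by
      exact ConcreteCategory.congr_hom e.inv_hom_id y
    have := hX H (f.comp (e.hom.hom : (X : Type u) →* Y))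
      (MonoidHom.mem_range.2 ⟨(e.inv.hom : (Y : Type u) →* X) y, rfl⟩)
    rwa [MonoidHom.comp_apply, h1] at this
  · -- ColimClosed
    intro J _ F c hc hobj H f
    have htop := colimit_iSup_range hc
    rw [MonoidHom.range_eq_map, ← htop, Subgroup.map_iSup]
    refine iSup_le fun j => ?_
    rw [← MonoidHom.range_comp]
    exact hobj j H (f.comp ((c.ι.app j).hom : (F.obj j : Type u) →* _))
  · -- QuotClosed
    intro X Q π hπ hX H f x hx
    obtain ⟨y, rfl⟩ := MonoidHom.mem_range.1 hx
    obtain ⟨z, rfl⟩ := hπ y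
    exact hX H (f.comp π) (MonoidHom.mem_range.2 ⟨z, rfl⟩)
  · -- ExtClosed
    intro N X Q ι π hι hπ hrange hN hQ H f
    letI : (radical (A : Type u) (H : Type u)).Normal := radical_normal _ _
    set T : Subgroup (H : Type u) := radical (A : Type u) (H : Type u) with hT
    have hker : π.ker ≤ ((QuotientGroup.mk' T).comp f).ker := by
      intro x hx
      have hx' : x ∈ ι.range := by rw [hrange]; exact hx
      obtain ⟨n, rfl⟩ := MonoidHom.mem_range.1 hx'
      have h1 : f (ι n) ∈ T := hN H (f.comp ι) (MonoidHom.mem_range.2 ⟨n, rfl⟩)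
      show QuotientGroup.mk' T (f (ι n)) = 1
      exact (QuotientGroup.eq_one_iff _).2 h1
    set g := π.liftOfRightInverse (Function.surjInv hπ) (Function.rightInverse_surjInv hπ)
      ⟨(QuotientGroup.mk' T).comp f, hker⟩ with hg
    have hgπ : g.comp π = (QuotientGroup.mk' T).comp f :=
      π.liftOfRightInverse_comp _ _ _
    have hgrange : g.range ≤ radical (A : Type u) ((H : Type u) ⧸ T) :=
      hQ (GrpCat.of ((H : Type u) ⧸ T)) g
    rw [radical_quot_eq_bot (A : Type u) (H : Type u) T (radical_hom_triv _ _)] at hgrange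
    intro x hx
    obtain ⟨y, rfl⟩ := MonoidHom.mem_range.1 hx
    have h2 : QuotientGroup.mk' T (f y) = 1 := by
      have h3 : g (π y) = 1 := hgrange (MonoidHom.mem_range.2 ⟨π y, rfl⟩)
      have h4 := DFunLike.congr_fun hgπ y
      rw [MonoidHom.comp_apply, MonoidHom.comp_apply] at h4
      rw [← h4]; exact h3
    exact (QuotientGroup.eq_one_iff _).1 h2
  · -- contains A
    intro H f x hx
    obtain ⟨a, rfl⟩ := MonoidHom.mem_range.1 hx
    letI : (radical (A : Type u) (H : Type u)).Normal := radical_normal _ _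
    have h1 : (QuotientGroup.mk' (radical (A : Type u) (H : Type u))).comp f = 1 :=
      radical_hom_triv (A : Type u) (H : Type u) _
    have h2 := DFunLike.congr_fun h1 a
    rw [MonoidHom.comp_apply, MonoidHom.one_apply] at h2
    exact (QuotientGroup.eq_one_iff _).1 h2

lemma radClass_mulEquiv {A X Y : GrpCat.{u}} (e : (X : Type u) ≃* (Y : Type u))
    (h : radClass A X) : radClass A Y :=
  fun C hI hCo hQ hE hA => hI (MulEquiv.toGrpIso e) (h C hI hCo hQ hE hA)

def radPSet (A G : GrpCat.{u}) : Set (Subgroup (G : Type u)) := {K | radClass A (GrpCat.of K)}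

noncomputable def MM (A G : GrpCat.{u}) : Subgroup (G : Type u) := sSup (radPSet A G)

lemma radClass_M (A G : GrpCat.{u}) : radClass A (GrpCat.of (MM A G)) := by
  intro C hI hCo hQ hE hA
  let σ : Type u := ↥(radPSet A G)
  let fobj : σ → GrpCat.{u} := fun i => GrpCat.of ↥(i.1)
  let cf : Cofan fobj := Cofan.mk (GrpCat.of (Monoid.CoprodI (fun i : σ => ↥(i.1))))
    (fun i => GrpCat.ofHom (Monoid.CoprodI.of (M := fun i : σ => ↥(i.1)) (i := i)))
  have iscolim : IsColimit cf := by
    refine mkCofanColimit cf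
      (fun t => GrpCat.ofHom (Monoid.CoprodI.lift (fun (i : σ) => ((t.inj i).hom : (↥(i.1) : Type u) →* (t.pt : Type u)))))
      (fun t i => ?_) (fun t m hm => ?_)
    · ext x
      exact Monoid.CoprodI.lift_of (M := fun i : σ => ↥(i.1))
        (fun (i : σ) => ((t.inj i).hom : (↥(i.1) : Type u) →* (t.pt : Type u))) x
    · show m = GrpCat.ofHom (Monoid.CoprodI.lift (fun (i : σ) => ((t.inj i).hom : (↥(i.1) : Type u) →* (t.pt : Type u))))
      refine GrpCat.hom_ext (Monoid.CoprodI.ext_hom _ _ fun i => ?_)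
      refine MonoidHom.ext fun x => ?_
      rw [MonoidHom.comp_apply, MonoidHom.comp_apply]
      have hlo := Monoid.CoprodI.lift_of (M := fun i : σ => ↥(i.1))
        (fun (i : σ) => ((t.inj i).hom : (↥(i.1) : Type u) →* (t.pt : Type u))) (i := i) x
      exact (ConcreteCategory.congr_hom (hm i) x).trans hlo.symm
  have hCpt : C cf.pt :=
    hCo (Discrete σ) (Discrete.functor fobj) cf iscolim (fun j => j.as.2 C hI hCo hQ hE hA)
  let ψ : Monoid.CoprodI (fun i : σ => ↥(i.1)) →* ↥(MM A G) :=
    Monoid.CoprodI.lift (fun i => Subgroup.inclusion (le_sSup i.2))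
  have hsurj : Function.Surjective ψ := by
    have hmap : Subgroup.map (MM A G).subtype ψ.range = MM A G := by
      apply le_antisymm (Subgroup.map_subtype_le _)
      apply sSup_le
      intro K hK x hx
      refine ⟨ψ (Monoid.CoprodI.of (i := (⟨K, hK⟩ : σ)) ⟨x, hx⟩),
        MonoidHom.mem_range.2 ⟨_, rfl⟩, ?_⟩
      show (MM A G).subtype (ψ (Monoid.CoprodI.of ⟨x, hx⟩)) = x
      rw [show ψ (Monoid.CoprodI.of (i := (⟨K, hK⟩ : σ)) ⟨x, hx⟩)
          = Subgroup.inclusion (le_sSup hK) ⟨x, hx⟩ from Monoid.CoprodI.lift_of _ _]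
      rfl
    intro m
    have hm : (m : (G : Type u)) ∈ Subgroup.map (MM A G).subtype ψ.range := by
      rw [hmap]; exact m.2
    obtain ⟨y, hy, hyx⟩ := hm
    obtain ⟨z, rfl⟩ := MonoidHom.mem_range.1 hy
    exact ⟨z, Subtype.ext hyx⟩
  exact hQ cf.pt (GrpCat.of ↥(MM A G)) ψ hsurj hCpt

lemma M_normal (A G : GrpCat.{u}) : (MM A G).Normal := by
  constructor
  intro n hn g
  let φ := (MulAut.conj g).toMonoidHom
  have hmap : Subgroup.map φ (MM A G) ≤ MM A G := by
    have heq : Subgroup.map φ (MM A G) = ⨆ i : ↥(radPSet A G), Subgroup.map φ i.1 := by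
      rw [MM, sSup_eq_iSup', Subgroup.map_iSup]
    rw [heq]
    refine iSup_le fun i => le_sSup
      (show Subgroup.map φ i.1 ∈ radPSet A G from
        radClass_mulEquiv (X := GrpCat.of ↥(i.1)) (Y := GrpCat.of ↥(Subgroup.map φ i.1))
          (Subgroup.equivMapOfInjective i.1 φ (MulAut.conj g).injective) i.2)
  have h1 : φ n ∈ Subgroup.map φ (MM A G) := ⟨n, hn, rfl⟩
  have h2 := hmap h1
  simpa [φ] using h2

lemma M_triv (A G : GrpCat.{u}) :
    letI := M_normal A G
    ∀ f : (A : Type u) →* (G : Type u) ⧸ MM A G, f = 1 := by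
  letI := M_normal A G
  intro f
  set R := f.range with hR
  set N := Subgroup.comap (QuotientGroup.mk' (MM A G)) R with hN
  have hMN : MM A G ≤ N := by
    intro x hx
    have h1 : QuotientGroup.mk' (MM A G) x = 1 := (QuotientGroup.eq_one_iff x).2 hx
    show QuotientGroup.mk' (MM A G) x ∈ R
    rw [h1]; exact one_mem R
  have hPN : N ∈ radPSet A G := by
    intro C hI hCo hQ hE hA
    have hCM : C (GrpCat.of ↥(MM A G)) := radClass_M A G C hI hCo hQ hE hA
    have hCR : C (GrpCat.of ↥R) := hQ A (GrpCat.of ↥R) f.rangeRestrict f.rangeRestrict_surjective hA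
    refine hE (GrpCat.of ↥(MM A G)) (GrpCat.of ↥N) (GrpCat.of ↥R)
      (Subgroup.inclusion hMN)
      (MonoidHom.codRestrict ((QuotientGroup.mk' (MM A G)).comp N.subtype) R (fun x => x.2))
      (Subgroup.inclusion_injective hMN) ?_ ?_ hCM hCR
    · intro r
      obtain ⟨x, hx⟩ := QuotientGroup.mk'_surjective (MM A G) r.1
      have hxN : x ∈ N := by
        show QuotientGroup.mk' _ x ∈ R
        rw [hx]; exact r.2
      exact ⟨⟨x, hxN⟩, Subtype.ext hx⟩
    · ext ⟨xv, hxv⟩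
      constructor
      · rintro ⟨y, hy⟩
        have h1 : (Subgroup.inclusion hMN y : ↥N) = ⟨xv, hxv⟩ := hy
        have h2 : xv ∈ MM A G := by
          have h0 : ((Subgroup.inclusion hMN y : ↥N) : (G : Type u)) = xv :=
            congrArg Subtype.val h1
          rw [← h0]
          exact (y : ↥(MM A G)).2
        show MonoidHom.codRestrict _ _ _ _ = 1
        refine Subtype.ext ?_
        show QuotientGroup.mk' (MM A G) xv = 1
        exact (QuotientGroup.eq_one_iff _).2 h2
      · intro hx1
        have h2 : QuotientGroup.mk' (MM A G) xv = 1 := congrArg Subtype.val hx1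
        have h3 : xv ∈ MM A G := (QuotientGroup.eq_one_iff _).1 h2
        exact ⟨⟨xv, h3⟩, Subtype.ext rfl⟩
  have hNM : N ≤ MM A G := le_sSup hPN
  ext a
  obtain ⟨x, hx⟩ := QuotientGroup.mk'_surjective (MM A G) (f a)
  have hxN : x ∈ N := by
    show QuotientGroup.mk' _ x ∈ R
    rw [hx]; exact ⟨a, rfl⟩
  rw [MonoidHom.one_apply, ← hx]
  exact (QuotientGroup.eq_one_iff x).2 (hNM hxN)

lemma radical_eq_M (A G : GrpCat.{u}) : radical (A : Type u) (G : Type u) = MM A G := by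
  apply le_antisymm
  · exact sInf_le ⟨M_normal A G, M_triv A G⟩
  · apply sSup_le
    intro K hK
    have h1 := radClass_range_le A (GrpCat.of ↥K) hK G K.subtype
    rwa [Subgroup.range_subtype] at h1

/-- `C_t(A)` is co-reflective with co-reflection the `A`-radical: `T_A G`
belongs to `C_t(A)`, and for every `L` in `C_t(A)` composition with the
inclusion `T_A G ↪ G` is a bijection `Hom(L, T_A G) → Hom(L, G)`. -/
theorem stmt8 (A G : GrpCat.{u}) :
    radClass A (GrpCat.of (radical (A : Type u) (G : Type u))) ∧
      ∀ L : GrpCat.{u}, radClass A L →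
        Function.Bijective
          (fun f : (L : Type u) →* radical (A : Type u) (G : Type u) =>
            (radical (A : Type u) (G : Type u)).subtype.comp f) := by
  constructor
  · have h := radClass_M A G
    rw [radical_eq_M A G]
    exact h
  · intro L hL
    constructor
    · intro f₁ f₂ h
      ext a
      exact DFunLike.congr_fun h a
    · intro g
      have hg := radClass_range_le A L hL G g
      exact ⟨MonoidHom.codRestrict g _ (fun x => hg ⟨x, rfl⟩), by ext x; rfl⟩
end

section
/- For every group A and every group G, there exist a group D belonging to C(A) and a homomorphism φ : D → G such that for every group L belonging to C(A), composition with φ induces a bijection Hom(L, D) → Hom(L, G). (In other words, the class C(A) is co-reflective, with co-reflection the A-cellular cover.) -/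
open CategoryTheory Limits
set_option maxHeartbeats 1000000

universe u v

/-- `C(A)`: the smallest class of groups containing `A` and closed under
isomorphisms and direct limits. -/
def cellClass (A G : GrpCat.{u}) : Prop :=
  ∀ C : GrpCat.{u} → Prop, IsoClosed C → ColimClosed C → C A → C G

namespace Stmt9

variable (A G : GrpCat.{u})

/-- The free product of copies of `A` indexed by all homomorphisms `A →* G`. -/
abbrev D0 : Type u :=
  Monoid.CoprodI (fun _ : ((A : Type u) →* (G : Type u)) => (A : Type u))

/-- The canonical map to `G`. -/
def pi : D0 A G →* G := Monoid.CoprodI.lift (fun i => i)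

/-- Two elements are related if they are represented by values `f a`, `g a` of a
pair of homomorphisms `A →* D0/c` having equal composites to `G`. -/
def rel (c : Con (D0 A G)) (hc : c ≤ Con.ker (pi A G)) (x y : D0 A G) : Prop :=
  ∃ (f g : (A : Type u) →* c.Quotient) (a : (A : Type u)),
    (c.lift (pi A G) hc).comp f = (c.lift (pi A G) hc).comp g ∧
      f a = c.mk' x ∧ g a = c.mk' y

lemma lift_comp_map {c d : Con (D0 A G)} (h : c ≤ d) (hd : d ≤ Con.ker (pi A G)) :
    (d.lift (pi A G) hd).comp (Con.map c d h) = c.lift (pi A G) (h.trans hd) := by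
  refine MonoidHom.ext fun x => ?_
  exact Con.induction_on x fun y => rfl

lemma rel_mono {c d : Con (D0 A G)} (h : c ≤ d) (hc : c ≤ Con.ker (pi A G))
    (hd : d ≤ Con.ker (pi A G)) {x y : D0 A G} (hr : rel A G c hc x y) :
    rel A G d hd x y := by
  obtain ⟨f, g, a, hfg, hfa, hga⟩ := hr
  refine ⟨(Con.map c d h).comp f, (Con.map c d h).comp g, a, ?_, ?_, ?_⟩
  · rw [← MonoidHom.comp_assoc, ← MonoidHom.comp_assoc, lift_comp_map A G h hd, hfg]
  · simp only [MonoidHom.comp_apply, hfa]; rfl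
  · simp only [MonoidHom.comp_apply, hga]; rfl

open Classical in
/-- The one-step operator. -/
noncomputable def Phi : Con (D0 A G) →o Con (D0 A G) where
  toFun c := if hc : c ≤ Con.ker (pi A G) then c ⊔ conGen (rel A G c hc) else ⊤
  monotone' := by
    intro c d h
    dsimp only
    by_cases hd : d ≤ Con.ker (pi A G)
    · have hc : c ≤ Con.ker (pi A G) := h.trans hd
      rw [dif_pos hc, dif_pos hd]
      exact sup_le_sup h (Con.conGen_mono fun x y hr => rel_mono A G h hc hd hr)
    · by_cases hc : c ≤ Con.ker (pi A G)
      · rw [dif_pos hc, dif_neg hd]; exact le_top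
      · rw [dif_neg hc, dif_neg hd]

lemma Phi_of_le {c : Con (D0 A G)} (hc : c ≤ Con.ker (pi A G)) :
    Phi A G c = c ⊔ conGen (rel A G c hc) := dif_pos hc

lemma Phi_le_ker {c : Con (D0 A G)} (hc : c ≤ Con.ker (pi A G)) :
    Phi A G c ≤ Con.ker (pi A G) := by
  rw [Phi_of_le A G hc]
  refine sup_le hc (Con.conGen_le.2 ?_)
  rintro x y ⟨f, g, a, hfg, hfa, hga⟩
  show pi A G x = pi A G y
  have hx : pi A G x = c.lift (pi A G) hc (f a) := by rw [hfa, Con.lift_mk']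
  have hy : pi A G y = c.lift (pi A G) hc (g a) := by rw [hga, Con.lift_mk']
  rw [hx, hy, ← MonoidHom.comp_apply, ← MonoidHom.comp_apply, hfg]

/-- The transfinite iteration of `Phi`, evaluated far enough to be a fixed point. -/
noncomputable def K : Con (D0 A G) :=
  OrdinalApprox.lfpApprox (Phi A G) ⊥ (Cardinal.ord <| Order.succ (Cardinal.mk (Con (D0 A G))))

lemma approx_le_ker (a : Ordinal.{u}) :
    OrdinalApprox.lfpApprox (Phi A G) ⊥ a ≤ Con.ker (pi A G) := by
  induction a using Ordinal.induction with
  | h a IH =>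
    rw [OrdinalApprox.lfpApprox]
    exact sup_le bot_le (iSup₂_le fun b hb => Phi_le_ker A G (IH b hb))

lemma K_le_ker : K A G ≤ Con.ker (pi A G) := approx_le_ker A G _

lemma K_fixed : Phi A G (K A G) = K A G :=
  OrdinalApprox.lfpApprox_ord_mem_fixedPoint (Phi A G) (x := ⊥) bot_le

lemma conGen_rel_le_K : conGen (rel A G (K A G) (K_le_ker A G)) ≤ K A G := by
  conv_rhs => rw [← K_fixed A G, Phi_of_le A G (K_le_ker A G)]
  exact le_sup_right

/-- The cellular cover of `G`. -/
noncomputable def DD : GrpCat.{u} := GrpCat.of (K A G).Quotient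

/-- The covering map. -/
noncomputable def phi : (DD A G : Type u) →* G := (K A G).lift (pi A G) (K_le_ker A G)

lemma phi_surj :
    Function.Surjective fun f : (A : Type u) →* (DD A G : Type u) => (phi A G).comp f := by
  intro h
  refine ⟨((K A G).mk').comp (Monoid.CoprodI.of (M := fun _ : ((A : Type u) →* (G : Type u)) => (A : Type u)) (i := h)), ?_⟩
  ext a
  show (K A G).lift (pi A G) (K_le_ker A G) ((K A G).mk' (Monoid.CoprodI.of a)) = h a
  rw [Con.lift_mk']
  exact Monoid.CoprodI.lift_of _ _

lemma phi_inj :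
    Function.Injective fun f : (A : Type u) →* (DD A G : Type u) => (phi A G).comp f := by
  intro f g hfg
  ext a
  obtain ⟨x, hx⟩ := Con.mk'_surjective (f a)
  obtain ⟨y, hy⟩ := Con.mk'_surjective (g a)
  have hr : rel A G (K A G) (K_le_ker A G) x y := ⟨f, g, a, hfg, hx.symm, hy.symm⟩
  have hK : (K A G) x y := conGen_rel_le_K A G (ConGen.Rel.of x y hr)
  rw [← hx, ← hy]
  exact (K A G).eq.2 hK

section Membership

variable (C : GrpCat.{u} → Prop)

lemma coprod_mem (hcolim : ColimClosed C) (hA : C A) (P : Type u) :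
    C (GrpCat.of (Monoid.CoprodI (fun _ : P => (A : Type u)))) := by
  let M : P → Type u := fun _ => (A : Type u)
  let s : Cofan (fun _ : P => A) :=
    Cofan.mk (GrpCat.of (Monoid.CoprodI M))
      (fun p => (GrpCat.ofHom (Monoid.CoprodI.of (M := M) (i := p)) : A ⟶ GrpCat.of (Monoid.CoprodI M)))
  have hs : IsColimit s :=
    mkCofanColimit s
      (fun t => (GrpCat.ofHom (Monoid.CoprodI.lift (fun p => (t.inj p).hom)) :
          GrpCat.of (Monoid.CoprodI M) ⟶ t.pt))
      (fun t p => GrpCat.hom_ext (MonoidHom.ext fun a => Monoid.CoprodI.lift_of _ _))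
      (fun t m hm => by
        refine GrpCat.hom_ext (Monoid.CoprodI.ext_hom _ _ fun p => ?_)
        refine ((congrArg GrpCat.Hom.hom (hm p)).trans ?_ : _)
        exact MonoidHom.ext fun a =>
          (Monoid.CoprodI.lift_of (fun p => (t.inj p).hom) a).symm)
  exact hcolim _ _ s hs (fun j => hA)

lemma sSup_mem (hcolim : ColimClosed C) (hA : C A) (S : Set (Con (D0 A G)))
    (hS : ∀ c ∈ S, C (GrpCat.of c.Quotient)) : C (GrpCat.of (sSup S).Quotient) := by
  let F := WidePushoutShape.wideSpan (GrpCat.of (D0 A G))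
      (fun c : S => GrpCat.of (c : Con (D0 A G)).Quotient)
      (fun c => GrpCat.ofHom ((c : Con (D0 A G)).mk' : D0 A G →* (c : Con (D0 A G)).Quotient))
  let t : Cocone F := WidePushoutShape.mkCocone (F := F) (X := GrpCat.of (sSup S).Quotient)
      (GrpCat.ofHom ((sSup S).mk' : D0 A G →* (sSup S).Quotient))
      (fun c => GrpCat.ofHom (Con.map _ _ (le_sSup c.2) :
        (c : Con (D0 A G)).Quotient →* (sSup S).Quotient))
      (fun c => by
        exact GrpCat.hom_ext (MonoidHom.ext fun x => rfl))
  have hnat : ∀ (s : Cocone F) (jj : S), ((s.ι.app none).hom : D0 A G →* s.pt) =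
      (((s.ι.app (some jj)).hom : (jj : Con (D0 A G)).Quotient →* s.pt)).comp
        ((jj : Con (D0 A G)).mk') :=
    fun s jj => congrArg GrpCat.Hom.hom (s.w (WidePushoutShape.Hom.init jj)).symm
  have hker : ∀ s : Cocone F, sSup S ≤ Con.ker ((s.ι.app none).hom : D0 A G →* s.pt) := by
    intro s
    refine sSup_le fun c hc x y hxy => ?_
    show ((s.ι.app none).hom : D0 A G →* s.pt) x = ((s.ι.app none).hom : D0 A G →* s.pt) y
    rw [hnat s ⟨c, hc⟩]
    have hmk : (c.mk' x : c.Quotient) = c.mk' y := c.eq.2 hxy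
    exact congrArg (s.ι.app (some ⟨c, hc⟩)).hom hmk
  have ht : IsColimit t := by
    refine ⟨fun s => (GrpCat.ofHom ((sSup S).lift (s.ι.app none).hom (hker s)) :
        GrpCat.of (sSup S).Quotient ⟶ s.pt), ?_, ?_⟩
    · intro s j
      match j with
      | none => exact GrpCat.hom_ext (MonoidHom.ext fun x => rfl)
      | some c =>
        refine GrpCat.hom_ext (MonoidHom.ext fun x => Con.induction_on x fun y => ?_)
        exact congrArg (fun k : D0 A G →* (s.pt : Type u) => k y) (hnat s c)
    · intro s m hm
      refine GrpCat.hom_ext (MonoidHom.ext fun x => Con.induction_on x fun y => ?_)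
      exact congrArg (fun k : GrpCat.of (D0 A G) ⟶ s.pt => k.hom y) (hm none)
  refine hcolim _ _ t ht ?_
  intro j
  match j with
  | none => exact coprod_mem A C hcolim hA _
  | some c => exact hS c c.2


/-- The shape of a multi-coequalizer diagram: one sink `none` and, for every
`p : P`, an object `some p` with two parallel arrows to the sink. -/
def MCShape (P : Type u) : Type u := Option P

/-- Morphisms in `MCShape`. -/
inductive MCHom {P : Type u} : MCShape P → MCShape P → Type u
  | id : ∀ X, MCHom X X
  | fst : ∀ p : P, MCHom (some p) none
  | snd : ∀ p : P, MCHom (some p) none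

/-- Composition in `MCShape`. -/
def MCcomp {P : Type u} : ∀ {X Y Z : MCShape P}, MCHom X Y → MCHom Y Z → MCHom X Z
  | _, _, _, MCHom.id _, g => g
  | _, _, _, MCHom.fst p, MCHom.id _ => MCHom.fst p
  | _, _, _, MCHom.snd p, MCHom.id _ => MCHom.snd p

instance MCcat (P : Type u) : SmallCategory (MCShape P) where
  Hom := MCHom
  id := MCHom.id
  comp := MCcomp
  id_comp f := rfl
  comp_id f := by cases f <;> rfl
  assoc f g h := by cases f <;> cases g <;> cases h <;> rfl

/-- The multi-coequalizer diagram given by two families of parallel maps. -/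
def MCFunctor {P : Type u} (X Y : GrpCat.{u}) (f g : P → (X ⟶ Y)) :
    MCShape P ⥤ GrpCat.{u} where
  obj o := Option.casesOn o Y (fun _ => X)
  map := fun {o₁ o₂} h => by
    change MCHom _ _ at h
    cases h with
    | id _ => exact 𝟙 _
    | fst p => exact f p
    | snd p => exact g p
  map_id o := rfl
  map_comp := fun {o₁ o₂ o₃} h₁ h₂ => by
    change MCHom _ _ at h₁ h₂
    cases h₁ <;> cases h₂ <;> simp [MCcomp] <;> rfl

lemma Phi_mem (hcolim : ColimClosed C) (hA : C A) {c : Con (D0 A G)}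
    (hc : c ≤ Con.ker (pi A G)) (h : C (GrpCat.of c.Quotient)) :
    C (GrpCat.of (Phi A G c).Quotient) := by
  rw [Phi_of_le A G hc]
  set e := c ⊔ conGen (rel A G c hc) with he
  let P := {p : ((A : Type u) →* c.Quotient) × ((A : Type u) →* c.Quotient) //
      (c.lift (pi A G) hc).comp p.1 = (c.lift (pi A G) hc).comp p.2}
  let F : MCShape P ⥤ GrpCat.{u} :=
    MCFunctor A (GrpCat.of c.Quotient) (fun p => (GrpCat.ofHom p.1.1 : A ⟶ GrpCat.of c.Quotient))
      (fun p => (GrpCat.ofHom p.1.2 : A ⟶ GrpCat.of c.Quotient))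
  let q : c.Quotient →* e.Quotient := Con.map c e le_sup_left
  have hq : ∀ p : P, q.comp (p.1.1) = q.comp (p.1.2) := by
    intro p
    refine MonoidHom.ext fun a => ?_
    obtain ⟨x, hx⟩ := Con.mk'_surjective (p.1.1 a)
    obtain ⟨y, hy⟩ := Con.mk'_surjective (p.1.2 a)
    have hr : rel A G c hc x y := ⟨p.1.1, p.1.2, a, p.2, hx.symm, hy.symm⟩
    have hexy : e x y := le_sup_right (a := c) (ConGen.Rel.of x y hr)
    show q (p.1.1 a) = q (p.1.2 a)
    rw [← hx, ← hy]
    exact e.eq.2 hexy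
  let t : Cocone F :=
    { pt := GrpCat.of e.Quotient
      ι :=
        { app := fun o => Option.casesOn o (GrpCat.ofHom q : GrpCat.of c.Quotient ⟶ GrpCat.of e.Quotient)
            (fun p => (GrpCat.ofHom (q.comp p.1.1) : A ⟶ GrpCat.of e.Quotient))
          naturality := by
            intro o₁ o₂ hm
            change MCHom _ _ at hm
            cases hm with
            | id =>
              rw [show (MCHom.id o₁ : o₁ ⟶ o₁) = 𝟙 o₁ from rfl, F.map_id, Category.id_comp]
              exact (Category.comp_id _).symm
            | fst p =>
              simp only [Functor.const_obj_map, Category.comp_id]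
              rfl
            | snd p =>
              simp only [Functor.const_obj_map, Category.comp_id]
              exact GrpCat.hom_ext (hq p).symm } }
  have hkers : ∀ s : Cocone F, e ≤ Con.ker
      (((s.ι.app none).hom : c.Quotient →* s.pt).comp c.mk') := by
    intro s
    refine sup_le ?_ (Con.conGen_le.2 ?_)
    · intro x y hxy
      show ((s.ι.app none).hom : c.Quotient →* s.pt) (c.mk' x) =
        ((s.ι.app none).hom : c.Quotient →* s.pt) (c.mk' y)
      exact congrArg ((s.ι.app none).hom : c.Quotient →* s.pt) (c.eq.2 hxy)
    · rintro x y ⟨f, g, a, hfg, hfa, hga⟩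
      show ((s.ι.app none).hom : c.Quotient →* s.pt) (c.mk' x) =
        ((s.ι.app none).hom : c.Quotient →* s.pt) (c.mk' y)
      rw [← hfa, ← hga]
      have h1 := congrArg (fun k : A ⟶ s.pt => k.hom a)
        (s.w (MCHom.fst ⟨(f, g), hfg⟩))
      have h2 := congrArg (fun k : A ⟶ s.pt => k.hom a)
        (s.w (MCHom.snd ⟨(f, g), hfg⟩))
      exact h1.trans h2.symm
  have ht : IsColimit t :=
    { desc := fun s => GrpCat.ofHom (e.lift (((s.ι.app none).hom : c.Quotient →* s.pt).comp c.mk')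
        (hkers s) : e.Quotient →* s.pt)
      fac := fun s j => by
        match j with
        | none => exact GrpCat.hom_ext (MonoidHom.ext fun x => Con.induction_on x fun y => rfl)
        | some p =>
          refine GrpCat.hom_ext (MonoidHom.ext fun a => ?_)
          obtain ⟨x, hx⟩ := Con.mk'_surjective
            ((p.1.1 : (A : Type u) →* c.Quotient) a)
          show (e.lift (((s.ι.app none).hom : c.Quotient →* s.pt).comp c.mk') (hkers s))
              (q ((p.1.1 : (A : Type u) →* c.Quotient) a)) = _
          rw [← hx]
          have h3 : (e.lift (((s.ι.app none).hom : c.Quotient →* s.pt).comp c.mk') (hkers s))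
              (q (c.mk' x)) = ((s.ι.app none).hom : c.Quotient →* s.pt) (c.mk' x) := rfl
          rw [h3, hx]
          exact congrArg (fun k : A ⟶ s.pt => k.hom a)
            (s.w (MCHom.fst p))
      uniq := fun s m hm => by
        refine GrpCat.hom_ext (MonoidHom.ext fun x => Con.induction_on x fun y => ?_)
        exact congrArg (fun k : GrpCat.of c.Quotient ⟶ s.pt => k.hom (c.mk' y)) (hm none) }
  refine hcolim (MCShape P) F t ht ?_
  intro j
  match j with
  | none => exact h
  | some p => exact hA


lemma approx_mem (hcolim : ColimClosed C) (hA : C A) (a : Ordinal.{u}) :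
    C (GrpCat.of (OrdinalApprox.lfpApprox (Phi A G) ⊥ a).Quotient) := by
  induction a using Ordinal.induction with
  | h a IH =>
    have heq : OrdinalApprox.lfpApprox (Phi A G) ⊥ a =
        sSup {d | ∃ b, ∃ _ : b < a, Phi A G (OrdinalApprox.lfpApprox (Phi A G) ⊥ b) = d} := by
      rw [OrdinalApprox.lfpApprox, bot_sup_eq]
      exact le_antisymm (iSup₂_le fun b hb => le_sSup ⟨b, hb, rfl⟩)
        (sSup_le fun _ ⟨b, hb, h⟩ => h ▸ le_iSup₂
          (f := fun b (_ : b < a) => Phi A G (OrdinalApprox.lfpApprox (Phi A G) ⊥ b)) b hb)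
    rw [heq]
    refine sSup_mem A G C hcolim hA _ ?_
    rintro c ⟨b, hb, rfl⟩
    exact Phi_mem A G C hcolim hA (approx_le_ker A G b) (IH b hb)

lemma DD_mem : cellClass A (DD A G) := by
  intro C _ hcolim hA
  exact approx_mem A G C hcolim hA _

end Membership

end Stmt9

/-- The class `C(A)` is co-reflective: for every group `G` there are a group
`D` in `C(A)` and a homomorphism `φ : D → G` such that for every `L` in `C(A)`
composition with `φ` is a bijection `Hom(L, D) → Hom(L, G)`. -/
theorem stmt9 (A G : GrpCat.{u}) :
    ∃ (D : GrpCat.{u}) (φ : (D : Type u) →* G), cellClass A D ∧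
      ∀ L : GrpCat.{u}, cellClass A L →
        Function.Bijective (fun f : (L : Type u) →* D => φ.comp f) := by
  classical
  refine ⟨Stmt9.DD A G, Stmt9.phi A G, Stmt9.DD_mem A G, ?_⟩
  set D := Stmt9.DD A G with hD
  set φ := Stmt9.phi A G with hφ
  intro L hL
  refine hL (fun L' => Function.Bijective
    (fun f : (L' : Type u) →* (D : Type u) => φ.comp f)) ?_ ?_ ?_
  · -- IsoClosed
    intro X Y e hX
    have hfixY : ∀ k : (Y : Type u) →* (D : Type u),
        (k.comp e.hom.hom).comp e.inv.hom = k := by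
      intro k
      refine MonoidHom.ext fun y => ?_
      show k (e.hom.hom (e.inv.hom y)) = k y
      refine congrArg k ?_
      exact congrArg (fun m : Y ⟶ Y => m.hom y) e.inv_hom_id
    constructor
    · intro f g hfg
      have h1 : φ.comp (f.comp e.hom.hom) =
          φ.comp (g.comp e.hom.hom) :=
        congrArg (fun k : (Y : Type u) →* (G : Type u) =>
          k.comp e.hom.hom) hfg
      have h2 := hX.1 h1
      have h3 := congrArg (fun k : (X : Type u) →* (D : Type u) =>
        k.comp e.inv.hom) h2
      simpa [hfixY] using h3
    · intro k
      obtain ⟨f0, hf0⟩ := hX.2 (k.comp e.hom.hom)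
      refine ⟨f0.comp e.inv.hom, ?_⟩
      show φ.comp (f0.comp e.inv.hom) = k
      have h1 : φ.comp (f0.comp e.inv.hom) =
          (φ.comp f0).comp e.inv.hom := rfl
      have hf0' : φ.comp f0 = k.comp e.hom.hom := hf0
      rw [h1, hf0']
      refine MonoidHom.ext fun y => ?_
      show k (e.hom.hom (e.inv.hom y)) = k y
      refine congrArg k ?_
      exact congrArg (fun m : Y ⟶ Y => m.hom y) e.inv_hom_id
  · -- ColimClosed
    intro J _ F cc hcc hobj
    constructor
    · intro f g hfg
      refine GrpCat.ofHom_injective (?_ : (GrpCat.ofHom f : cc.pt ⟶ D) = GrpCat.ofHom g)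
      refine hcc.hom_ext fun j => GrpCat.hom_ext ?_
      exact (hobj j).1 (congrArg (fun k : (cc.pt : Type u) →* (G : Type u) =>
        k.comp (cc.ι.app j).hom) hfg)
    · intro k
      have hch : ∀ j, ∃ m : (F.obj j : Type u) →* (D : Type u),
          φ.comp m = k.comp (cc.ι.app j).hom :=
        fun j => (hobj j).2 (k.comp (cc.ι.app j).hom)
      let kj : ∀ j, (F.obj j : Type u) →* (D : Type u) := fun j => (hch j).choose
      have hkj : ∀ j, φ.comp (kj j) =
          k.comp (cc.ι.app j).hom := fun j => (hch j).choose_spec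
      let dd : Cocone F :=
        { pt := D
          ι :=
            { app := fun j => (GrpCat.ofHom (kj j) : F.obj j ⟶ D)
              naturality := by
                intro j j' m
                simp only [Functor.const_obj_map, Category.comp_id]
                refine GrpCat.hom_ext ((hobj j).1 ?_)
                show φ.comp ((kj j').comp (F.map m).hom) =
                  φ.comp (kj j)
                have h1 : φ.comp ((kj j').comp (F.map m).hom) =
                    (φ.comp (kj j')).comp (F.map m).hom := rfl
                rw [h1, hkj j', hkj j]
                exact congrArg (fun t : F.obj j ⟶ cc.pt =>
                  k.comp t.hom) (cc.w m)
              } }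
      refine ⟨(hcc.desc dd).hom, ?_⟩
      refine GrpCat.ofHom_injective (?_ : (GrpCat.ofHom (φ.comp (hcc.desc dd).hom) :
        cc.pt ⟶ GrpCat.of G) = GrpCat.ofHom k)
      refine hcc.hom_ext fun j => GrpCat.hom_ext ?_
      show φ.comp ((hcc.desc dd).hom.comp
        (cc.ι.app j).hom) = k.comp (cc.ι.app j).hom
      rw [show ((hcc.desc dd).hom.comp
        (cc.ι.app j).hom) = kj j from congrArg GrpCat.Hom.hom (hcc.fac dd j)]
      exact hkj j
  · exact ⟨Stmt9.phi_inj A G, Stmt9.phi_surj A G⟩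
end
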